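/- Let M be a combinatorial monoidal model category satisfying the monoid axiom that is enriched over the category of ℚ-vector spaces. Then M satisfies the Σ_n-equivariant monoid axiom: transfinite compositions of pushouts of maps of the form f ⊗_{Σ_n} X, where f has underlying map a trivial cofibration of Σ_n-modules and X is any Σ_n-module, are weak equivalences. Consequently every operad in M is admissible. -/

import Mathlib

/-!
STATEMENT 13: Let `M` be a combinatorial monoidal model category satisfying the monoid
axiom that is enriched over ℚ-vector spaces.  Then `M` satisfies the
`Σ_n`-equivariant monoid axiom: transfinite compositions of pushouts of maps of the
form `f ⊗_{Σ_n} X`, where `f` is a map of `Σ_n`-modules whose underlying map is a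
trivial cofibration and `X` is any `Σ_n`-module, are weak equivalences.
(Consequently — via White's Corollary C.5, which requires a theory of operads not
available here — every operad in `M` is admissible, i.e. the transferred model
structure exists on its algebras.)

Formalization notes.  The model structure enters through its classes `W` (weak
equivalences, closed under retracts) and `TrivCof` (trivial cofibrations).
`Σ_n`-modules are `Action M G` for `G = Σ_n`, and `f ⊗_{Σ_n} X` is the image of
`f ▷ X` under the coinvariants functor `Q` (the colimit over the one-object category
of `G`).  "Transfinite compositions of pushouts of maps in `P`" is abstracted as an
operator `cell` on morphism properties which is monotone and compatible with retracts
(both properties hold for the genuine cell-closure).  The monoid axiom is the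
hypothesis `hmonoid`; the conclusion is the `Σ_n`-equivariant monoid axiom.
-/

open CategoryTheory CategoryTheory.Limits CategoryTheory.MonoidalCategory

universe u



/-- `f` is a retract of `g` in the arrow category. -/
def IsArrowRetract {D : Type*} [Category D] {A B X Y : D} (f : A ⟶ B) (g : X ⟶ Y) : Prop :=
  ∃ (i : Arrow.mk f ⟶ Arrow.mk g) (r : Arrow.mk g ⟶ Arrow.mk f), i ≫ r = 𝟙 (Arrow.mk f)

/-- The class of maps of the form `t ⊗ X` (`t ∈ P`, `X` arbitrary), up to isomorphism
of arrows. -/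
def tensorClass {M : Type*} [Category M] [MonoidalCategory M] (P : MorphismProperty M) :
    MorphismProperty M :=
  fun _ _ h => ∃ (A B : M) (t : A ⟶ B) (X : M),
    P t ∧ Nonempty (Arrow.mk h ≅ Arrow.mk (t ▷ X))

section Helper
variable {M : Type (u + 1)} [LargeCategory M] [Preadditive M] [CategoryTheory.Linear ℚ M]
variable {G₀ : Type u} [Group G₀] [Fintype G₀]
variable [HasColimitsOfShape (SingleObj (MonCat.of G₀)) M]

local notation "G" => MonCat.of G₀

/-- The underlying `SingleObj G ⥤ M` functor of an action. -/
abbrev actF (A : Action M G) : SingleObj (MonCat.of G₀) ⥤ M :=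
  (Action.functorCategoryEquivalence M G).functor.obj A

/-- underlying endomorphism of the action of `g` -/
def rhoHom (A : Action M G) (g : G₀) : A.V ⟶ A.V := A.ρ g

/-- averaging endomorphism -/
noncomputable def avg (A : Action M G) : A.V ⟶ A.V :=
  (Fintype.card G₀ : ℚ)⁻¹ • ∑ g : G₀, rhoHom A g

lemma rho_comp_avg (A : Action M G) (h : G₀) :
    rhoHom A h ≫ avg A = avg A := by
  unfold avg
  rw [Linear.comp_smul, Preadditive.comp_sum]
  congr 1
  have : ∀ g : G₀, rhoHom A h ≫ rhoHom A g = rhoHom A (g * h) := by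
    intro g
    show _ = ((A.ρ (g*h) : End A.V)); rw [map_mul]; rfl
  simp_rw [this]
  exact Equiv.sum_comp (Equiv.mulRight h) (fun g : G₀ => rhoHom A g)

lemma avg_comp_hom {A B : Action M G} (φ : A ⟶ B) :
    avg A ≫ φ.hom = φ.hom ≫ avg B := by
  unfold avg
  rw [Linear.smul_comp, Linear.comp_smul, Preadditive.sum_comp,
    Preadditive.comp_sum]
  congr 1
  refine Finset.sum_congr rfl fun g _ => ?_
  show (A.ρ g : End A.V) ≫ φ.hom = φ.hom ≫ (B.ρ g : End B.V)
  exact φ.comm g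

/-- the canonical projection to coinvariants -/
noncomputable def toCoinv (A : Action M G) : A.V ⟶ colimit (actF A) :=
  colimit.ι (actF A) (SingleObj.star G₀)

lemma rho_comp_toCoinv (A : Action M G) (g : G₀) :
    rhoHom A g ≫ toCoinv A = toCoinv A :=
  colimit.w (actF A) (g : (SingleObj.star G₀ ⟶ SingleObj.star G₀))

/-- the averaged section of the projection -/
noncomputable def secCoinv (A : Action M G) : colimit (actF A) ⟶ A.V :=
  colimit.desc (actF A)
    { pt := A.V
      ι :=
        { app := fun _ => avg A
          naturality := fun _ _ g => by
            exact (rho_comp_avg A g).trans (Category.comp_id _).symm } }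

lemma toCoinv_secCoinv (A : Action M G) : toCoinv A ≫ secCoinv A = avg A :=
  colimit.ι_desc _ _

lemma secCoinv_toCoinv (A : Action M G) :
    secCoinv A ≫ toCoinv A = 𝟙 (colimit (actF A)) := by
  apply colimit.hom_ext
  rintro ⟨⟩
  rw [Category.comp_id]
  have h1 : colimit.ι (actF A) (SingleObj.star G₀) ≫ secCoinv A ≫ toCoinv A
      = avg A ≫ toCoinv A := by
    rw [← Category.assoc]
    exact congrArg (· ≫ toCoinv A) (toCoinv_secCoinv A)
  refine h1.trans ?_
  unfold avg
  rw [Linear.smul_comp, Preadditive.sum_comp]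
  simp_rw [rho_comp_toCoinv A]
  rw [Finset.sum_const, Finset.card_univ, ← Nat.cast_smul_eq_nsmul ℚ, smul_smul,
    inv_mul_cancel₀ (by exact_mod_cast Fintype.card_ne_zero), one_smul]
  rfl

end Helper

section Helper2
variable {M : Type (u + 1)} [LargeCategory M] [Preadditive M] [CategoryTheory.Linear ℚ M]
variable {G₀ : Type u} [Group G₀] [Fintype G₀]
variable [HasColimitsOfShape (SingleObj (MonCat.of G₀)) M]

/-- retract transfers along an arrow isomorphism -/
lemma isArrowRetract_of_iso {D : Type*} [Category D] {A B A' B' X Y : D}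
    {f : A ⟶ B} {f' : A' ⟶ B'} {g : X ⟶ Y}
    (e : Arrow.mk f ≅ Arrow.mk f') (h : IsArrowRetract f' g) : IsArrowRetract f g := by
  obtain ⟨i, r, hir⟩ := h
  refine ⟨e.hom ≫ i, r ≫ e.inv, ?_⟩
  rw [Category.assoc, ← Category.assoc i, hir, Category.id_comp, e.hom_inv_id]

lemma ι_secCoinv (A : Action M (MonCat.of G₀)) (j : SingleObj (MonCat.of G₀ : Type u)) :
    colimit.ι (actF A) j ≫ secCoinv A = avg A :=
  colimit.ι_desc _ _

lemma ι_eq_toCoinv (A : Action M (MonCat.of G₀)) (j : SingleObj (MonCat.of G₀ : Type u)) :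
    colimit.ι (actF A) j = toCoinv A :=
  congrArg _ (Subsingleton.elim _ _)

lemma ι_Qmap {A B : Action M (MonCat.of G₀)} (φ : A ⟶ B)
    (j : SingleObj (MonCat.of G₀ : Type u)) :
    colimit.ι (actF A) j ≫
      ((Action.functorCategoryEquivalence M (MonCat.of G₀)).functor ⋙ colim).map φ
      = φ.hom ≫ colimit.ι (actF B) j :=
  Eq.trans (ι_colimMap ((Action.functorCategoryEquivalence M (MonCat.of G₀)).functor.map φ) j) rfl

/-- The coinvariants of an equivariant map form a retract of the underlying map. -/
lemma coinv_retract {A B : Action M (MonCat.of G₀)} (φ : A ⟶ B) :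
    IsArrowRetract
      (((Action.functorCategoryEquivalence M (MonCat.of G₀)).functor ⋙ colim).map φ)
      φ.hom := by
  have sq1 : secCoinv A ≫ φ.hom
      = ((Action.functorCategoryEquivalence M (MonCat.of G₀)).functor ⋙ colim).map φ
        ≫ secCoinv B := by
    apply colimit.hom_ext
    intro j
    rw [← Category.assoc, ι_secCoinv, ← Category.assoc, ι_Qmap]
    show avg A ≫ φ.hom = (φ.hom ≫ toCoinv B) ≫ secCoinv B
    rw [Category.assoc, toCoinv_secCoinv]
    exact avg_comp_hom φ
  have sq2 : toCoinv A ≫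
      ((Action.functorCategoryEquivalence M (MonCat.of G₀)).functor ⋙ colim).map φ
      = φ.hom ≫ toCoinv B := by
    exact ι_Qmap φ (SingleObj.star G₀)
  have hsec : secCoinv A ≫ toCoinv A = 𝟙 _ := secCoinv_toCoinv A
  have hsecB : secCoinv B ≫ toCoinv B = 𝟙 _ := secCoinv_toCoinv B
  refine ⟨Arrow.homMk (u := secCoinv A) (v := secCoinv B) sq1,
    Arrow.homMk (u := toCoinv A) (v := toCoinv B) sq2, ?_⟩
  apply CommaMorphism.ext
  · exact hsec
  · exact hsecB

end Helper2

theorem sigma_n_equivariant_monoid_axiom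
    {M : Type (u + 1)} [LargeCategory M] [MonoidalCategory M]
    [Preadditive M] [CategoryTheory.Linear ℚ M]  -- `M` is enriched over ℚ-Vect
    (W TrivCof : MorphismProperty M)
    -- `W` is closed under retracts:
    (hWretract : ∀ {A B X Y : M} (f : A ⟶ B) (g : X ⟶ Y),
      IsArrowRetract f g → W g → W f)
    -- the "transfinite compositions of pushouts" operator, monotone and compatible
    -- with retracts:
    (cell : MorphismProperty M → MorphismProperty M)
    (hcellMono : ∀ P Q : MorphismProperty M, P ≤ Q → cell P ≤ cell Q)
    (hcellRetract : ∀ P Q : MorphismProperty M,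
      (∀ {A B : M} (f : A ⟶ B), P f → ∃ (X Y : M) (g : X ⟶ Y), Q g ∧ IsArrowRetract f g) →
      (∀ {A B : M} (f : A ⟶ B), cell P f →
        ∃ (X Y : M) (g : X ⟶ Y), cell Q g ∧ IsArrowRetract f g))
    -- the monoid axiom:
    (hmonoid : ∀ {A B : M} (f : A ⟶ B), cell (tensorClass TrivCof) f → W f)
    (n : ℕ)
    [HasColimitsOfShape
      (SingleObj (MonCat.of (Equiv.Perm (ULift.{u} (Fin n))))) M] :
    -- the Σ_n-equivariant monoid axiom: with
    -- `G = Σ_n`, `Q` the coinvariants functor on `Σ_n`-modules,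
    ∀ (Q : Action M (MonCat.of (Equiv.Perm (ULift.{u} (Fin n)))) ⥤ M),
      Q = (Action.functorCategoryEquivalence M
            (MonCat.of (Equiv.Perm (ULift.{u} (Fin n))))).functor ⋙ colim →
    -- every transfinite composition of pushouts of maps `Q.map (f ▷ X) = f ⊗_{Σ_n} X`
    -- with `f` a map of `Σ_n`-modules whose underlying map is a trivial cofibration
    -- is a weak equivalence:
      ∀ {A B : M} (h : A ⟶ B),
        cell (fun _ _ h' =>
          ∃ (A' B' : Action M (MonCat.of (Equiv.Perm (ULift.{u} (Fin n)))))
            (f : A' ⟶ B')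
            (X : Action M (MonCat.of (Equiv.Perm (ULift.{u} (Fin n))))),
            TrivCof ((Action.forget M _).map f) ∧
            Nonempty (Arrow.mk h' ≅ Arrow.mk (Q.map (f ▷ X)))) h →
        W h := by
  
  intro Q hQ
  subst hQ
  intro A B h hcell
  obtain ⟨X, Y, g, hg, hret⟩ := hcellRetract _ (tensorClass TrivCof)
    (fun {A₀ B₀} f hf => by
      obtain ⟨A', B', f', X', hTC, ⟨e⟩⟩ := hf
      refine ⟨_, _, (Action.forget M _).map f' ▷ X'.V,
        ⟨_, _, (Action.forget M _).map f', X'.V, hTC, ⟨Iso.refl _⟩⟩, ?_⟩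
      refine isArrowRetract_of_iso e ?_
      have hco := coinv_retract (M := M) (G₀ := Equiv.Perm (ULift.{u} (Fin n))) (f' ▷ X')
      simp at hco ⊢
      exact hco) h hcell
  exact hWretract h g hret (hmonoid g hg)
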